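/- Let t₂, t₃, t₄, η satisfy the symmetrical system (8) and additionally assume the Jacobi identity t₃⁴ = t₂⁴ + t₄⁴ holds at all times. Define X = (2i/π){η + (π²/12)(t₃⁴ + t₄⁴)}, Y = (2i/π){η + (π²/12)(t₂⁴ - t₄⁴)}, Z = (2i/π){η - (π²/12)(t₂⁴ + t₃⁴)}. Then (X,Y,Z) satisfies the Darboux–Halphen system X' = (Y+Z)X - YZ, Y' = (X+Z)Y - XZ, Z' = (X+Y)Z - XY. -/
import Mathlib


open Complex

/-- On the level surface given by Jacobi's identity, the symmetrical system (8)
reduces to the Darboux–Halphen system. -/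
theorem symmetric_system_darboux_halphen (t₂ t₃ t₄ η X Y Z : ℂ → ℂ)
    (h2 : Differentiable ℂ t₂) (h3 : Differentiable ℂ t₃)
    (h4 : Differentiable ℂ t₄) (hη : Differentiable ℂ η)
    (hd2 : ∀ τ, deriv t₂ τ = (Complex.I / (Real.pi : ℂ)) *
      (η τ + ((Real.pi : ℂ) ^ 2 / 12) * ((t₃ τ) ^ 4 + (t₄ τ) ^ 4)) * t₂ τ)
    (hd3 : ∀ τ, deriv t₃ τ = (Complex.I / (Real.pi : ℂ)) *
      (η τ + ((Real.pi : ℂ) ^ 2 / 12) * ((t₂ τ) ^ 4 - (t₄ τ) ^ 4)) * t₃ τ)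
    (hd4 : ∀ τ, deriv t₄ τ = (Complex.I / (Real.pi : ℂ)) *
      (η τ - ((Real.pi : ℂ) ^ 2 / 12) * ((t₂ τ) ^ 4 + (t₃ τ) ^ 4)) * t₄ τ)
    (hdη : ∀ τ, deriv η τ = (Complex.I / (Real.pi : ℂ)) *
      (2 * (η τ) ^ 2 - ((Real.pi : ℂ) ^ 4 / 144) *
        ((t₂ τ) ^ 8 + (t₃ τ) ^ 8 + (t₄ τ) ^ 8)))
    (hjac : ∀ τ, (t₃ τ) ^ 4 = (t₂ τ) ^ 4 + (t₄ τ) ^ 4)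
    (hX : ∀ τ, X τ = (2 * Complex.I / (Real.pi : ℂ)) *
      (η τ + ((Real.pi : ℂ) ^ 2 / 12) * ((t₃ τ) ^ 4 + (t₄ τ) ^ 4)))
    (hY : ∀ τ, Y τ = (2 * Complex.I / (Real.pi : ℂ)) *
      (η τ + ((Real.pi : ℂ) ^ 2 / 12) * ((t₂ τ) ^ 4 - (t₄ τ) ^ 4)))
    (hZ : ∀ τ, Z τ = (2 * Complex.I / (Real.pi : ℂ)) *
      (η τ - ((Real.pi : ℂ) ^ 2 / 12) * ((t₂ τ) ^ 4 + (t₃ τ) ^ 4))) :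
    (∀ τ, deriv X τ = (Y τ + Z τ) * X τ - Y τ * Z τ) ∧
    (∀ τ, deriv Y τ = (X τ + Z τ) * Y τ - X τ * Z τ) ∧
    (∀ τ, deriv Z τ = (X τ + Y τ) * Z τ - X τ * Y τ) := by
  have hXf : X = fun τ => (2 * Complex.I / (Real.pi : ℂ)) *
      (η τ + ((Real.pi : ℂ) ^ 2 / 12) * ((t₃ τ) ^ 4 + (t₄ τ) ^ 4)) := funext hX
  have hYf : Y = fun τ => (2 * Complex.I / (Real.pi : ℂ)) *
      (η τ + ((Real.pi : ℂ) ^ 2 / 12) * ((t₂ τ) ^ 4 - (t₄ τ) ^ 4)) := funext hY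
  have hZf : Z = fun τ => (2 * Complex.I / (Real.pi : ℂ)) *
      (η τ - ((Real.pi : ℂ) ^ 2 / 12) * ((t₂ τ) ^ 4 + (t₃ τ) ^ 4)) := funext hZ
  refine ⟨fun τ => ?_, fun τ => ?_, fun τ => ?_⟩
  · have H3 := (h3 τ).hasDerivAt
    have H4 := (h4 τ).hasDerivAt
    have Hη := (hη τ).hasDerivAt
    have HX := HasDerivAt.const_mul (2 * Complex.I / (Real.pi : ℂ))
      (Hη.add (HasDerivAt.const_mul ((Real.pi : ℂ) ^ 2 / 12) ((H3.pow 4).add (H4.pow 4))))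
    have dX : deriv X τ = (2 * Complex.I / (Real.pi : ℂ)) *
        (deriv η τ + ((Real.pi : ℂ) ^ 2 / 12) *
          ((4 : ℕ) * t₃ τ ^ (4 - 1) * deriv t₃ τ + (4 : ℕ) * t₄ τ ^ (4 - 1) * deriv t₄ τ)) := by
      rw [hXf]; exact HX.deriv
    rw [dX, hdη τ, hd3 τ, hd4 τ, hX τ, hY τ, hZ τ]
    push_cast
    linear_combination (2 * (Complex.I / (Real.pi : ℂ)) ^ 2 * ((Real.pi : ℂ) ^ 2 / 12) ^ 2 *
      (t₃ τ ^ 4 + 3 * t₂ τ ^ 4 - t₄ τ ^ 4)) * hjac τ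
  · have H2 := (h2 τ).hasDerivAt
    have H4 := (h4 τ).hasDerivAt
    have Hη := (hη τ).hasDerivAt
    have HY := HasDerivAt.const_mul (2 * Complex.I / (Real.pi : ℂ))
      (Hη.add (HasDerivAt.const_mul ((Real.pi : ℂ) ^ 2 / 12) ((H2.pow 4).sub (H4.pow 4))))
    have dY : deriv Y τ = (2 * Complex.I / (Real.pi : ℂ)) *
        (deriv η τ + ((Real.pi : ℂ) ^ 2 / 12) *
          ((4 : ℕ) * t₂ τ ^ (4 - 1) * deriv t₂ τ - (4 : ℕ) * t₄ τ ^ (4 - 1) * deriv t₄ τ)) := by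
      rw [hYf]; exact HY.deriv
    rw [dY, hdη τ, hd2 τ, hd4 τ, hX τ, hY τ, hZ τ]
    push_cast
    linear_combination (-2 * (Complex.I / (Real.pi : ℂ)) ^ 2 * ((Real.pi : ℂ) ^ 2 / 12) ^ 2 *
      (3 * t₃ τ ^ 4 + t₂ τ ^ 4 + t₄ τ ^ 4)) * hjac τ
  · have H2 := (h2 τ).hasDerivAt
    have H3 := (h3 τ).hasDerivAt
    have Hη := (hη τ).hasDerivAt
    have HZ := HasDerivAt.const_mul (2 * Complex.I / (Real.pi : ℂ))
      (Hη.sub (HasDerivAt.const_mul ((Real.pi : ℂ) ^ 2 / 12) ((H2.pow 4).add (H3.pow 4))))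
    have dZ : deriv Z τ = (2 * Complex.I / (Real.pi : ℂ)) *
        (deriv η τ - ((Real.pi : ℂ) ^ 2 / 12) *
          ((4 : ℕ) * t₂ τ ^ (4 - 1) * deriv t₂ τ + (4 : ℕ) * t₃ τ ^ (4 - 1) * deriv t₃ τ)) := by
      rw [hZf]; exact HZ.deriv
    rw [dZ, hdη τ, hd2 τ, hd3 τ, hX τ, hY τ, hZ τ]
    push_cast
    linear_combination (2 * (Complex.I / (Real.pi : ℂ)) ^ 2 * ((Real.pi : ℂ) ^ 2 / 12) ^ 2 *
      (t₃ τ ^ 4 + 3 * t₄ τ ^ 4 - t₂ τ ^ 4)) * hjac τ
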